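/- arXiv:0901.3577 — 3 statements merged into one kernel-verified Lean document; each statement's English description precedes it below -/
import Mathlib

section
/- Let f : [a,b] → ℝ be continuous and let p ∈ [a,b]. Then the star-shaped envelope of f with respect to p exists and is a continuous function on [a,b]; that is, the pointwise supremum of all minorants of f on [a,b] that are star-shaped with respect to p is itself a star-shaped (with respect to p) minorant of f and is continuous. -/
open Set

noncomputable section

/-- A set `S` is star-shaped with respect to a point `x ∈ S` when, for every `y ∈ S`,
the segment `[x,y]` lies in `S`. -/
def StarShapedWrt {V : Type*} [AddCommGroup V] [Module ℝ V] (S : Set V) (x : V) : Prop :=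
  x ∈ S ∧ ∀ y ∈ S, segment ℝ x y ⊆ S

/-- The epigraph of `f : S → ℝ`: `{(y,μ) ∈ S × ℝ : f(y) ≤ μ}`. -/
def Epigraph {V : Type*} (S : Set V) (f : V → ℝ) : Set (V × ℝ) :=
  {p : V × ℝ | p.1 ∈ S ∧ f p.1 ≤ p.2}

/-- A function `f : S → ℝ` is star-shaped with respect to `x` when its epigraph is
star-shaped with respect to `(x, f(x))`. -/
def StarShapedFunOn {V : Type*} [AddCommGroup V] [Module ℝ V]
    (S : Set V) (x : V) (f : V → ℝ) : Prop :=
  StarShapedWrt (Epigraph S f) (x, f x)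

/-- The star-shaped envelope of `f` on `S` with respect to `x`: the pointwise supremum of
all star-shaped (w.r.t. `x`) minorants of `f` on `S`. -/
def starEnv {V : Type*} [AddCommGroup V] [Module ℝ V]
    (S : Set V) (x : V) (f : V → ℝ) : V → ℝ :=
  fun y => sSup {r : ℝ | ∃ g : V → ℝ, StarShapedFunOn S x g ∧ (∀ z ∈ S, g z ≤ f z) ∧ r = g y}





/-! ### Auxiliary development -/

def Lf (f : ℝ → ℝ) (p z y : ℝ) : ℝ := f p + (f z - f p) * ((y - p) / (z - p))

def Dset (a b p y : ℝ) : Set ℝ := {z | z ∈ Icc a b ∧ y ∈ segment ℝ p z}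

def Fe (a b p : ℝ) (f : ℝ → ℝ) (y : ℝ) : ℝ :=
  sInf ((fun z => Lf f p z y) '' Dset a b p y)

lemma Lf_def (f : ℝ → ℝ) (p z y : ℝ) :
    Lf f p z y = f p + (f z - f p) * ((y - p) / (z - p)) := rfl

lemma Dset_def (a b p y : ℝ) :
    Dset a b p y = {z | z ∈ Icc a b ∧ y ∈ segment ℝ p z} := rfl

lemma Fe_def (a b p : ℝ) (f : ℝ → ℝ) (y : ℝ) :
    Fe a b p f y = sInf ((fun z => Lf f p z y) '' Dset a b p y) := rfl

lemma ratio_facts {p z y : ℝ} (h : y ∈ segment ℝ p z) :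
    0 ≤ (y - p) / (z - p) ∧ (y - p) / (z - p) ≤ 1 ∧ y - p = (y - p) / (z - p) * (z - p) := by
  rcases h with ⟨s, t, hs, ht, hst, hxy⟩
  by_cases hz : z = p
  · have hy : y = p := by
      rw [hz] at hxy; simp only [smul_eq_mul] at hxy; linear_combination -hxy + p * hst
    rw [hy, hz]
    simp
  · have hzp : z - p ≠ 0 := sub_ne_zero.mpr hz
    have hy : y - p = t * (z - p) := by
      have : s = 1 - t := by linarith
      subst this
      simp only [smul_eq_mul] at hxy
      nlinarith
    have hr : (y - p) / (z - p) = t := by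
      rw [hy, mul_div_assoc, div_self hzp, mul_one]
    refine ⟨by rw [hr]; exact ht, by rw [hr]; linarith, by rw [hr, ← hy]⟩

lemma Lf_self (f : ℝ → ℝ) (p y : ℝ) : Lf f p y y = f y := by
  by_cases h : y = p
  · subst h; simp [Lf]
  · simp [Lf, div_self (sub_ne_zero.mpr h)]

lemma mem_Dset_self {a b p y : ℝ} (hy : y ∈ Icc a b) : y ∈ Dset a b p y :=
  ⟨hy, right_mem_segment ℝ p y⟩

lemma Dimg_nonempty {a b p y : ℝ} (hy : y ∈ Icc a b) :
    ((fun z => Lf f p z y) '' Dset a b p y).Nonempty :=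
  ⟨Lf f p y y, ⟨y, mem_Dset_self hy, rfl⟩⟩

lemma Lf_bound {a b p C : ℝ} {f : ℝ → ℝ} (hC : ∀ z ∈ Icc a b, |f z - f p| ≤ C)
    {z y : ℝ} (hz : z ∈ Dset a b p y) : |Lf f p z y - f p| ≤ C := by
  obtain ⟨hr0, hr1, -⟩ := ratio_facts hz.2
  have h1 : |Lf f p z y - f p| = |f z - f p| * ((y - p) / (z - p)) := by
    rw [Lf]; rw [add_sub_cancel_left, abs_mul, abs_of_nonneg hr0]
  rw [h1]
  calc |f z - f p| * ((y - p) / (z - p)) ≤ |f z - f p| * 1 :=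
        mul_le_mul_of_nonneg_left hr1 (abs_nonneg _)
    _ = |f z - f p| := mul_one _
    _ ≤ C := hC z hz.1

lemma Dimg_bddBelow {a b p C : ℝ} {f : ℝ → ℝ} (hC : ∀ z ∈ Icc a b, |f z - f p| ≤ C) (y : ℝ) :
    BddBelow ((fun z => Lf f p z y) '' Dset a b p y) := by
  refine ⟨f p - C, ?_⟩
  rintro r ⟨z, hz, rfl⟩
  have := Lf_bound hC hz
  have := abs_le.mp this
  linarith [this.1]

lemma Fe_le_f {a b p C : ℝ} {f : ℝ → ℝ} (hC : ∀ z ∈ Icc a b, |f z - f p| ≤ C)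
    {y : ℝ} (hy : y ∈ Icc a b) : Fe a b p f y ≤ f y := by
  have := csInf_le (Dimg_bddBelow hC y) ⟨y, mem_Dset_self hy, Lf_self f p y⟩
  simpa [Fe] using this

lemma Fe_ge {a b p C : ℝ} {f : ℝ → ℝ} (hC : ∀ z ∈ Icc a b, |f z - f p| ≤ C)
    {y : ℝ} (hy : y ∈ Icc a b) : f p - C ≤ Fe a b p f y := by
  apply le_csInf (Dimg_nonempty hy)
  rintro r ⟨z, hz, rfl⟩
  have := abs_le.mp (Lf_bound hC hz)
  linarith [this.1]

lemma Fe_p {a b p : ℝ} {f : ℝ → ℝ} (hp : p ∈ Icc a b) : Fe a b p f p = f p := by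
  have himg : ((fun z => Lf f p z p) '' Dset a b p p) = {f p} := by
    apply Subset.antisymm
    · rintro r ⟨z, hz, rfl⟩
      simp [Lf]
    · rintro r hr
      rcases hr with rfl
      exact ⟨p, mem_Dset_self hp, Lf_self f p p⟩
  rw [Fe, himg, csInf_singleton]

-- star inequality
lemma Fe_star_ineq {a b p C : ℝ} {f : ℝ → ℝ} (hp : p ∈ Icc a b)
    (hC : ∀ z ∈ Icc a b, |f z - f p| ≤ C)
    {y s t : ℝ} (hy : y ∈ Icc a b) (hs : 0 ≤ s) (ht : 0 ≤ t) (hst : s + t = 1) :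
    Fe a b p f (s * p + t * y) ≤ s * f p + t * Fe a b p f y := by
  rcases eq_or_lt_of_le ht with ht0 | htpos
  · -- t = 0
    have hs1 : s = 1 := by linarith
    rw [← ht0, hs1]
    simp only [one_mul, zero_mul, add_zero]
    rw [Fe_p hp]
  · apply le_of_forall_pos_le_add
    intro ε hε
    have hne : ((fun z => Lf f p z y) '' Dset a b p y).Nonempty := Dimg_nonempty hy
    have hlt : sInf ((fun z => Lf f p z y) '' Dset a b p y) < Fe a b p f y + ε / t := by
      rw [← Fe_def]; linarith [div_pos hε htpos]
    obtain ⟨r, ⟨z, hz, rfl⟩, hrlt⟩ := exists_lt_of_csInf_lt hne hlt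
    have hzD : z ∈ Dset a b p y := hz
    rw [Dset_def] at hzD
    -- w := s*p + t*y
    set w := s * p + t * y with hw
    have hwseg : w ∈ segment ℝ p y := ⟨s, t, hs, ht, hst, by simp [smul_eq_mul, hw]⟩
    have hwz : w ∈ segment ℝ p z :=
      (convex_segment p z).segment_subset (left_mem_segment ℝ p z) hzD.2 hwseg
    have hwD : w ∈ Dset a b p w := by
      rw [Dset_def]
      exact ⟨(convex_Icc a b) hp hy hs ht hst, right_mem_segment ℝ p w⟩
    have hzDw : z ∈ Dset a b p w := by
      rw [Dset_def]; exact ⟨hzD.1, hwz⟩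
    have hFw : Fe a b p f w ≤ Lf f p z w := by
      rw [Fe_def]
      exact csInf_le (Dimg_bddBelow hC w) ⟨z, hzDw, rfl⟩
    -- Lf f p z w = f p + t * (Lf f p z y - f p)
    have hkey : Lf f p z w = f p + t * (Lf f p z y - f p) := by
      rw [Lf_def, Lf_def]
      have hwp : w - p = t * (y - p) := by rw [hw]; linear_combination p * hst
      by_cases hzp : z = p
      · rw [hzp]; simp
      · have hzp' : z - p ≠ 0 := sub_ne_zero.mpr hzp
        field_simp [hwp]
        linear_combination (f z - f p) * hwp
    have ht' : t * (Lf f p z y - f p) ≤ t * (Fe a b p f y + ε / t - f p) :=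
      mul_le_mul_of_nonneg_left (by linarith) ht
    have htε : t * (ε / t) = ε := mul_div_cancel₀ ε (ne_of_gt htpos)
    calc Fe a b p f w ≤ f p + t * (Lf f p z y - f p) := by rw [← hkey]; exact hFw
      _ ≤ f p + t * (Fe a b p f y + ε / t - f p) := by linarith
      _ = s * f p + t * Fe a b p f y + ε := by
          have : t * (Fe a b p f y + ε / t - f p) = t * Fe a b p f y + ε - t * f p := by
            rw [mul_sub, mul_add, htε]
          rw [this]; have hs' : s = 1 - t := by linarith
          rw [hs']; ring

lemma Fe_ge_minorant {a b p : ℝ} {f g : ℝ → ℝ} (hp : p ∈ Icc a b)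
    (hg : StarShapedFunOn (Icc a b) p g) (hgf : ∀ z ∈ Icc a b, g z ≤ f z)
    {y : ℝ} (hy : y ∈ Icc a b) : g y ≤ Fe a b p f y := by
  rw [Fe_def]
  apply le_csInf (Dimg_nonempty hy)
  rintro r ⟨z, hz, rfl⟩
  rw [Dset_def] at hz
  obtain ⟨hzI, hseg⟩ := hz
  obtain ⟨s, t, hs, ht, hst, hy'⟩ := hseg
  simp only [smul_eq_mul] at hy'
  have hepi : (z, g z) ∈ Epigraph (Icc a b) g := ⟨hzI, le_refl _⟩
  have hmem : ((y, s * g p + t * g z) : ℝ × ℝ) ∈ segment ℝ (p, g p) (z, g z) := by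
    refine ⟨s, t, hs, ht, hst, ?_⟩
    simp only [Prod.smul_mk, smul_eq_mul, Prod.mk_add_mk, Prod.mk.injEq]
    exact ⟨hy', trivial⟩
  have h2 := hg.2 (z, g z) hepi hmem
  have hgy : g y ≤ s * g p + t * g z := h2.2
  have hgp : g p ≤ f p := hgf p hp
  have hgz : g z ≤ f z := hgf z hzI
  have : g y ≤ s * f p + t * f z := by nlinarith
  have hLf : s * f p + t * f z = Lf f p z y := by
    rw [Lf_def]
    by_cases hzp : z = p
    · rw [hzp] at hy' ⊢
      have hyp2 : y = p := by linear_combination (-1 : ℝ) * hy' + p * hst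
      rw [hyp2]; simp
      linear_combination (f p) * hst
    · have hzp' : z - p ≠ 0 := sub_ne_zero.mpr hzp
      have hyp : y - p = t * (z - p) := by linear_combination (-1 : ℝ) * hy' + p * hst
      have hr : (y - p) / (z - p) = t := by rw [hyp, mul_div_assoc, div_self hzp', mul_one]
      rw [hr]; have : s = 1 - t := by linarith
      rw [this]; ring
  linarith

lemma Fe_starshaped {a b p C : ℝ} {f : ℝ → ℝ} (hp : p ∈ Icc a b)
    (hC : ∀ z ∈ Icc a b, |f z - f p| ≤ C) :
    StarShapedFunOn (Icc a b) p (Fe a b p f) := by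
  constructor
  · exact ⟨hp, le_refl _⟩
  · rintro ⟨y, μ⟩ ⟨hyI, hyμ⟩ ⟨w, ν⟩ ⟨s, t, hs, ht, hst, heq⟩
    simp only [Prod.smul_mk, smul_eq_mul, Prod.mk_add_mk, Prod.mk.injEq] at heq
    obtain ⟨hw, hν⟩ := heq
    constructor
    · show w ∈ Icc a b
      rw [← hw]; exact (convex_Icc a b) hp hyI hs ht hst
    · show Fe a b p f w ≤ ν
      rw [← hw, ← hν]
      calc Fe a b p f (s * p + t * y) ≤ s * f p + t * Fe a b p f y :=
            Fe_star_ineq hp hC hyI hs ht hst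
        _ ≤ s * Fe a b p f p + t * μ := by
            rw [Fe_p hp]
            have := mul_le_mul_of_nonneg_left hyμ ht
            linarith

lemma starEnv_eq_Fe {a b p C : ℝ} {f : ℝ → ℝ} (hp : p ∈ Icc a b)
    (hC : ∀ z ∈ Icc a b, |f z - f p| ≤ C)
    {y : ℝ} (hy : y ∈ Icc a b) : starEnv (Icc a b) p f y = Fe a b p f y := by
  have hmem : Fe a b p f y ∈ {r : ℝ | ∃ g : ℝ → ℝ, StarShapedFunOn (Icc a b) p g ∧
      (∀ z ∈ Icc a b, g z ≤ f z) ∧ r = g y} :=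
    ⟨Fe a b p f, Fe_starshaped hp hC, fun z hz => Fe_le_f hC hz, rfl⟩
  have hub : ∀ r ∈ {r : ℝ | ∃ g : ℝ → ℝ, StarShapedFunOn (Icc a b) p g ∧
      (∀ z ∈ Icc a b, g z ≤ f z) ∧ r = g y}, r ≤ Fe a b p f y := by
    rintro r ⟨g, hg1, hg2, rfl⟩
    exact Fe_ge_minorant hp hg1 hg2 hy
  exact le_antisymm (csSup_le ⟨_, hmem⟩ hub) (le_csSup ⟨Fe a b p f y, hub⟩ hmem)

lemma Dset_right {a b p y : ℝ} (ha : a ≤ p) (hpy : p < y) (hyb : y ≤ b) :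
    Dset a b p y = Icc y b := by
  rw [Dset_def]
  ext z
  simp only [mem_setOf_eq, segment_eq_uIcc, mem_uIcc, mem_Icc]
  constructor
  · rintro ⟨⟨hza, hzb⟩, h | h⟩
    · exact ⟨h.2, hzb⟩
    · linarith [h.2]
  · rintro ⟨hyz, hzb⟩
    exact ⟨⟨by linarith, hzb⟩, Or.inl ⟨le_of_lt hpy, hyz⟩⟩

lemma est_right {a b p C ω : ℝ} {f : ℝ → ℝ} (hp : p ∈ Icc a b)
    (hC0 : 0 ≤ C) (hC : ∀ z ∈ Icc a b, |f z - f p| ≤ C)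
    {y₁ y₂ : ℝ} (h1 : p < y₁) (h12 : y₁ ≤ y₂) (h2b : y₂ ≤ b) (hω0 : 0 ≤ ω)
    (hω : ∀ u ∈ Icc a b, ∀ v ∈ Icc a b, |u - v| ≤ y₂ - y₁ → |f u - f v| ≤ ω) :
    |Fe a b p f y₂ - Fe a b p f y₁| ≤ C * (y₂ - y₁) / (y₁ - p) + ω := by
  obtain ⟨hap, hpb⟩ := hp
  have hy₁I : y₁ ∈ Icc a b := ⟨by linarith, by linarith⟩
  have hy₂I : y₂ ∈ Icc a b := ⟨by linarith, by linarith⟩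
  have hd1 : 0 < y₁ - p := by linarith
  have hd2 : 0 < y₂ - p := by linarith
  have hD1 : Dset a b p y₁ = Icc y₁ b := Dset_right hap h1 (by linarith)
  have hD2 : Dset a b p y₂ = Icc y₂ b := Dset_right hap (by linarith) h2b
  have hle : C * (y₂ - y₁) / (y₂ - p) ≤ C * (y₂ - y₁) / (y₁ - p) := by
    have hnum : 0 ≤ C * (y₂ - y₁) := mul_nonneg hC0 (by linarith)
    apply div_le_div_of_nonneg_left hnum hd1 (by linarith)
  -- Part A : Fe y₁ ≤ Fe y₂ + C (y₂-y₁)/(y₂-p)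
  have hA : Fe a b p f y₁ ≤ Fe a b p f y₂ + C * (y₂ - y₁) / (y₂ - p) := by
    apply le_of_forall_pos_le_add
    intro ε hε
    have hlt : sInf ((fun z => Lf f p z y₂) '' Dset a b p y₂) < Fe a b p f y₂ + ε := by
      rw [← Fe_def]; linarith
    obtain ⟨r, ⟨z, hz, rfl⟩, hrlt⟩ := exists_lt_of_csInf_lt (Dimg_nonempty hy₂I) hlt
    have hzIcc : z ∈ Icc y₂ b := hD2 ▸ hz
    have hzp : (0:ℝ) < z - p := by
      have := hzIcc.1; linarith
    have hz1 : z ∈ Dset a b p y₁ := by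
      rw [hD1]; exact ⟨by linarith [hzIcc.1], hzIcc.2⟩
    have hFe1 : Fe a b p f y₁ ≤ Lf f p z y₁ := by
      rw [Fe_def]; exact csInf_le (Dimg_bddBelow hC y₁) ⟨z, hz1, rfl⟩
    have hdiff : Lf f p z y₁ - Lf f p z y₂ = (f z - f p) * ((y₁ - y₂) / (z - p)) := by
      rw [Lf_def, Lf_def]
      field_simp
      ring
    have hzI : z ∈ Icc a b := ⟨by linarith [hzIcc.1], hzIcc.2⟩
    have habs : |(f z - f p) * ((y₁ - y₂) / (z - p))| ≤ C * ((y₂ - y₁) / (y₂ - p)) := by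
      rw [abs_mul]
      apply mul_le_mul (hC z hzI) ?_ (abs_nonneg _) hC0
      rw [abs_div, abs_of_pos hzp, abs_of_nonpos (by linarith : y₁ - y₂ ≤ 0), neg_sub]
      gcongr
      · linarith [hzIcc.1]
    have := abs_le.mp habs
    have hmd : C * ((y₂ - y₁) / (y₂ - p)) = C * (y₂ - y₁) / (y₂ - p) := by ring
    linarith [this.1, this.2]
  -- Part B : Fe y₂ ≤ Fe y₁ + C (y₂-y₁)/(y₁-p) + ω
  have hB : Fe a b p f y₂ ≤ Fe a b p f y₁ + C * (y₂ - y₁) / (y₁ - p) + ω := by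
    apply le_of_forall_pos_le_add
    intro ε hε
    have hlt : sInf ((fun z => Lf f p z y₁) '' Dset a b p y₁) < Fe a b p f y₁ + ε := by
      rw [← Fe_def]; linarith
    obtain ⟨r, ⟨z, hz, rfl⟩, hrlt⟩ := exists_lt_of_csInf_lt (Dimg_nonempty hy₁I) hlt
    have hzIcc : z ∈ Icc y₁ b := hD1 ▸ hz
    have hzp : (0:ℝ) < z - p := by have := hzIcc.1; linarith
    have hzI : z ∈ Icc a b := ⟨by linarith [hzIcc.1], hzIcc.2⟩
    by_cases hcase : y₂ ≤ z
    · have hz2 : z ∈ Dset a b p y₂ := by rw [hD2]; exact ⟨hcase, hzIcc.2⟩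
      have hFe2 : Fe a b p f y₂ ≤ Lf f p z y₂ := by
        rw [Fe_def]; exact csInf_le (Dimg_bddBelow hC y₂) ⟨z, hz2, rfl⟩
      have hdiff : Lf f p z y₂ - Lf f p z y₁ = (f z - f p) * ((y₂ - y₁) / (z - p)) := by
        rw [Lf_def, Lf_def]; field_simp; ring
      have habs : |(f z - f p) * ((y₂ - y₁) / (z - p))| ≤ C * ((y₂ - y₁) / (y₁ - p)) := by
        rw [abs_mul]
        apply mul_le_mul (hC z hzI) ?_ (abs_nonneg _) hC0
        rw [abs_div, abs_of_pos hzp, abs_of_nonneg (by linarith : (0:ℝ) ≤ y₂ - y₁)]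
        gcongr
        · linarith
      have := abs_le.mp habs
      have hmd : C * ((y₂ - y₁) / (y₁ - p)) = C * (y₂ - y₁) / (y₁ - p) := by ring
      linarith [this.2]
    · push_neg at hcase
      have hFe2 : Fe a b p f y₂ ≤ f y₂ := Fe_le_f hC hy₂I
      have hfy₂ : |f y₂ - f z| ≤ ω := by
        apply hω y₂ hy₂I z hzI
        rw [abs_of_nonneg (by linarith [hzIcc.1] : (0:ℝ) ≤ y₂ - z)]
        linarith [hzIcc.1]
      have hy₁p : y₁ - p ≠ 0 := ne_of_gt hd1
      have hzp' : z - p ≠ 0 := ne_of_gt hzp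
      have hkey : f z - Lf f p z y₁ = (Lf f p z y₁ - f p) * ((z - y₁) / (y₁ - p)) := by
        rw [Lf_def]
        field_simp
        ring
      have hLb : |Lf f p z y₁ - f p| ≤ C := Lf_bound hC hz
      have hq0 : (0:ℝ) ≤ (z - y₁) / (y₁ - p) := div_nonneg (by linarith [hzIcc.1]) (le_of_lt hd1)
      have hq1 : (z - y₁) / (y₁ - p) ≤ (y₂ - y₁) / (y₁ - p) := by
        gcongr
        all_goals linarith
      have hfz : f z ≤ Lf f p z y₁ + C * ((y₂ - y₁) / (y₁ - p)) := by
        have h1' : (Lf f p z y₁ - f p) * ((z - y₁) / (y₁ - p)) ≤ C * ((z - y₁) / (y₁ - p)) :=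
          mul_le_mul_of_nonneg_right (le_of_abs_le hLb) hq0
        have h2' : C * ((z - y₁) / (y₁ - p)) ≤ C * ((y₂ - y₁) / (y₁ - p)) :=
          mul_le_mul_of_nonneg_left hq1 hC0
        linarith [hkey]
      have := abs_le.mp hfy₂
      have hmd : C * ((y₂ - y₁) / (y₁ - p)) = C * (y₂ - y₁) / (y₁ - p) := by ring
      linarith [this.1]
  rw [abs_sub_le_iff]
  constructor <;> linarith

-- reflection of Dset
lemma Dset_neg {a b p y z : ℝ} (h : z ∈ Dset a b p y) : -z ∈ Dset (-b) (-a) (-p) (-y) := by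
  rw [Dset_def] at h ⊢
  obtain ⟨⟨hza, hzb⟩, hseg⟩ := h
  refine ⟨⟨by simpa using hzb, by simpa using hza⟩, ?_⟩
  obtain ⟨s, t, hs, ht, hst, heq⟩ := hseg
  exact ⟨s, t, hs, ht, hst, by simp only [smul_eq_mul] at heq ⊢; linarith [heq]⟩

lemma Lf_neg (f : ℝ → ℝ) (p z y : ℝ) :
    Lf (fun x => f (-x)) (-p) (-z) (-y) = Lf f p z y := by
  rw [Lf_def, Lf_def]
  simp only [neg_neg]
  have h1 : -y - -p = -(y - p) := by ring
  have h2 : -z - -p = -(z - p) := by ring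
  rw [h1, h2, neg_div_neg_eq]

lemma Fe_reflect (a b p : ℝ) (f : ℝ → ℝ) (y : ℝ) :
    Fe a b p f y = Fe (-b) (-a) (-p) (fun x => f (-x)) (-y) := by
  rw [Fe_def, Fe_def]
  congr 1
  ext r
  constructor
  · rintro ⟨z, hz, rfl⟩
    exact ⟨-z, Dset_neg hz, Lf_neg f p z y⟩
  · rintro ⟨w, hw, rfl⟩
    have h2 := Dset_neg hw
    simp only [neg_neg] at h2
    refine ⟨-w, h2, ?_⟩
    have := Lf_neg f p (-w) y
    rw [neg_neg] at this
    exact this.symm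

-- lower bound near p
lemma Fe_lower {a b p C ω δ' : ℝ} {f : ℝ → ℝ} (hC0 : 0 ≤ C)
    (hC : ∀ z ∈ Icc a b, |f z - f p| ≤ C) (hδ : 0 < δ') (hω0 : 0 ≤ ω)
    (hω : ∀ u ∈ Icc a b, |u - p| ≤ δ' → |f u - f p| ≤ ω)
    {y : ℝ} (hy : y ∈ Icc a b) :
    f p - max ω (C * |y - p| / δ') ≤ Fe a b p f y := by
  rw [Fe_def]
  apply le_csInf (Dimg_nonempty hy)
  rintro r ⟨z, hz, rfl⟩
  rw [Dset_def] at hz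
  obtain ⟨hzI, hseg⟩ := hz
  obtain ⟨hr0, hr1, hyp⟩ := ratio_facts hseg
  simp only
  rw [Lf_def]
  have key : -(max ω (C * |y - p| / δ')) ≤ (f z - f p) * ((y - p) / (z - p)) := by
    by_cases hzd : |z - p| ≤ δ'
    · have h1 : |f z - f p| ≤ ω := hω z hzI hzd
      have h2 : |(f z - f p) * ((y - p) / (z - p))| ≤ ω := by
        rw [abs_mul, abs_of_nonneg hr0]
        calc |f z - f p| * ((y - p) / (z - p)) ≤ ω * 1 :=
              mul_le_mul h1 hr1 hr0 hω0
          _ = ω := mul_one ω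
      have h3 := neg_abs_le ((f z - f p) * ((y - p) / (z - p)))
      have h4 := le_max_left ω (C * |y - p| / δ')
      linarith
    · push_neg at hzd
      have hzne : z - p ≠ 0 := by
        intro h0; rw [h0] at hzd; simp at hzd; linarith
      have hrle : (y - p) / (z - p) ≤ |y - p| / δ' := by
        rw [le_div_iff₀ hδ]
        have habs : |y - p| = (y - p) / (z - p) * |z - p| := by
          conv_lhs => rw [hyp]
          rw [abs_mul, abs_of_nonneg hr0]
        nlinarith [hr0, hzd]
      have habs2 : |(f z - f p) * ((y - p) / (z - p))| ≤ C * (|y - p| / δ') := by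
        rw [abs_mul, abs_of_nonneg hr0]
        exact mul_le_mul (hC z hzI) hrle hr0 hC0
      have h3 := neg_abs_le ((f z - f p) * ((y - p) / (z - p)))
      have h4 := le_max_right ω (C * |y - p| / δ')
      have h5 : C * (|y - p| / δ') = C * |y - p| / δ' := by ring
      linarith
  linarith

lemma cwa_right {a b p C : ℝ} {f : ℝ → ℝ} (hp : p ∈ Icc a b)
    (hf : ContinuousOn f (Icc a b)) (hC0 : 0 ≤ C)
    (hC : ∀ z ∈ Icc a b, |f z - f p| ≤ C)
    {y₀ : ℝ} (hy₀ : y₀ ∈ Icc a b) (hpy₀ : p < y₀) :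
    ContinuousWithinAt (Fe a b p f) (Icc a b) y₀ := by
  rw [Metric.continuousWithinAt_iff]
  intro ε hε
  obtain ⟨δ₁, hδ₁, hδ₁'⟩ := Metric.uniformContinuousOn_iff.mp
    (isCompact_Icc.uniformContinuousOn_of_continuous hf) (ε/4) (by linarith)
  set d := y₀ - p with hd
  have hd0 : 0 < d := by rw [hd]; linarith
  have hCpos : (0:ℝ) < C + 1 := by linarith
  refine ⟨min (min (d/2) (δ₁/2)) (ε * d / (8 * (C + 1))), by positivity, ?_⟩
  intro y hy hyd
  rw [Real.dist_eq] at hyd ⊢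
  have hyd1 : |y - y₀| < d/2 := lt_of_lt_of_le hyd (le_trans (min_le_left _ _) (min_le_left _ _))
  have hyd2 : |y - y₀| < δ₁/2 := lt_of_lt_of_le hyd (le_trans (min_le_left _ _) (min_le_right _ _))
  have hyd3 : |y - y₀| < ε * d / (8 * (C + 1)) := lt_of_lt_of_le hyd (min_le_right _ _)
  set y₁ := min y y₀ with hy₁
  set y₂ := max y y₀ with hy₂
  have h21 : y₂ - y₁ = |y - y₀| := by
    rw [hy₂, hy₁, max_sub_min_eq_abs, abs_sub_comm]
  have hylo : y₀ - |y - y₀| ≤ y := by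
    have := abs_sub_comm y y₀ ▸ le_abs_self (y₀ - y)
    linarith
  have h1 : p < y₁ := by
    have : y₀ - |y - y₀| ≤ y₁ := le_min hylo (by linarith [abs_nonneg (y - y₀)])
    have : p + d/2 ≤ y₁ + (d/2 - |y - y₀|) + |y - y₀| - (d/2 - |y-y₀|) := by
      simp only [hd] at *; linarith
    linarith [hyd1, abs_nonneg (y - y₀)]
  have h12 : y₁ ≤ y₂ := min_le_max
  have h2b : y₂ ≤ b := max_le hy.2 hy₀.2
  have hωc : ∀ u ∈ Icc a b, ∀ v ∈ Icc a b, |u - v| ≤ y₂ - y₁ → |f u - f v| ≤ ε/4 := by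
    intro u hu v hv huv
    apply le_of_lt
    apply hδ₁' u hu v hv
    rw [Real.dist_eq]
    calc |u - v| ≤ y₂ - y₁ := huv
      _ = |y - y₀| := h21
      _ < δ₁/2 := hyd2
      _ < δ₁ := by linarith
  have hest := est_right hp hC0 hC h1 h12 h2b (by linarith : (0:ℝ) ≤ ε/4) hωc
  -- bound the main term
  have hy₁p : d/2 ≤ y₁ - p := by
    have h₁ : y₀ - |y - y₀| ≤ y₁ := le_min hylo (by linarith [abs_nonneg (y - y₀)])
    rw [hd] at *
    linarith [hyd1]
  have hnum : 0 ≤ C * (y₂ - y₁) := mul_nonneg hC0 (by linarith)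
  have hb1 : C * (y₂ - y₁) / (y₁ - p) ≤ C * (y₂ - y₁) / (d/2) :=
    div_le_div_of_nonneg_left hnum (by linarith) hy₁p
  have hfield : (C + 1) * (ε * d / (8 * (C + 1))) = ε * d / 8 := by
    field_simp
  have hb2 : C * (y₂ - y₁) / (d/2) ≤ ε/4 := by
    rw [div_le_iff₀ (by linarith : (0:ℝ) < d/2)]
    have e1 : C * (y₂ - y₁) ≤ C * (ε * d / (8 * (C + 1))) := by
      apply mul_le_mul_of_nonneg_left _ hC0
      rw [h21]; exact le_of_lt hyd3
    have e2 : C * (ε * d / (8 * (C + 1))) ≤ (C + 1) * (ε * d / (8 * (C + 1))) := by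
      apply mul_le_mul_of_nonneg_right (by linarith) (by positivity)
    have e3 : ε / 4 * (d / 2) = ε * d / 8 := by ring
    linarith
  have hkey : |Fe a b p f y - Fe a b p f y₀| = |Fe a b p f y₂ - Fe a b p f y₁| := by
    rcases le_total y y₀ with h | h
    · rw [hy₁, hy₂, min_eq_left h, max_eq_right h, abs_sub_comm]
    · rw [hy₁, hy₂, min_eq_right h, max_eq_left h]
  rw [hkey]
  calc |Fe a b p f y₂ - Fe a b p f y₁| ≤ C * (y₂ - y₁) / (y₁ - p) + ε/4 := hest
    _ ≤ ε/4 + ε/4 := by linarith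
    _ < ε := by linarith

lemma cwa_at_p {a b p C : ℝ} {f : ℝ → ℝ} (hp : p ∈ Icc a b)
    (hf : ContinuousOn f (Icc a b)) (hC0 : 0 ≤ C)
    (hC : ∀ z ∈ Icc a b, |f z - f p| ≤ C) :
    ContinuousWithinAt (Fe a b p f) (Icc a b) p := by
  rw [Metric.continuousWithinAt_iff]
  intro ε hε
  obtain ⟨δ₁, hδ₁, hδ₁'⟩ := Metric.uniformContinuousOn_iff.mp
    (isCompact_Icc.uniformContinuousOn_of_continuous hf) (ε/2) (by linarith)
  have hCpos : (0:ℝ) < C + 1 := by linarith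
  refine ⟨min (δ₁/2) (ε * δ₁ / (8 * (C + 1))), by positivity, ?_⟩
  intro y hy hyd
  rw [Real.dist_eq] at hyd ⊢
  have hyd1 : |y - p| < δ₁/2 := lt_of_lt_of_le hyd (min_le_left _ _)
  have hyd2 : |y - p| < ε * δ₁ / (8 * (C + 1)) := lt_of_lt_of_le hyd (min_le_right _ _)
  rw [Fe_p hp]
  have hupper : Fe a b p f y - f p ≤ ε/2 := by
    have h1 : Fe a b p f y ≤ f y := Fe_le_f hC hy
    have h2 : |f y - f p| < ε/2 := by
      apply hδ₁' y hy p hp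
      rw [Real.dist_eq]; linarith
    have := abs_le.mp (le_of_lt h2)
    linarith [this.2]
  have hωc : ∀ u ∈ Icc a b, |u - p| ≤ δ₁/2 → |f u - f p| ≤ ε/2 := by
    intro u hu huδ
    apply le_of_lt
    apply hδ₁' u hu p hp
    rw [Real.dist_eq]; linarith
  have hlow := Fe_lower hC0 hC (by linarith : (0:ℝ) < δ₁/2) (by linarith : (0:ℝ) ≤ ε/2) hωc hy
  have hb : C * |y - p| / (δ₁/2) ≤ ε/2 := by
    rw [div_le_iff₀ (by linarith : (0:ℝ) < δ₁/2)]
    have e1 : C * |y - p| ≤ C * (ε * δ₁ / (8 * (C + 1))) :=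
      mul_le_mul_of_nonneg_left (le_of_lt hyd2) hC0
    have e2 : C * (ε * δ₁ / (8 * (C + 1))) ≤ (C + 1) * (ε * δ₁ / (8 * (C + 1))) :=
      mul_le_mul_of_nonneg_right (by linarith) (by positivity)
    have hfield : (C + 1) * (ε * δ₁ / (8 * (C + 1))) = ε * δ₁ / 8 := by field_simp
    nlinarith [hε, hδ₁]
  have hmax : max (ε/2) (C * |y - p| / (δ₁/2)) ≤ ε/2 := max_le (le_refl _) hb
  have hlow2 : f p - ε/2 ≤ Fe a b p f y := by
    have := sub_le_sub_left hmax (f p)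
    linarith
  have habs : |Fe a b p f y - f p| ≤ ε/2 := abs_le.mpr ⟨by linarith, hupper⟩
  linarith

lemma cwa_left {a b p C : ℝ} {f : ℝ → ℝ} (hp : p ∈ Icc a b)
    (hf : ContinuousOn f (Icc a b)) (hC0 : 0 ≤ C)
    (hC : ∀ z ∈ Icc a b, |f z - f p| ≤ C)
    {y₀ : ℝ} (hy₀ : y₀ ∈ Icc a b) (hpy₀ : y₀ < p) :
    ContinuousWithinAt (Fe a b p f) (Icc a b) y₀ := by
  have hmaps : MapsTo Neg.neg (Icc a b) (Icc (-b) (-a)) := by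
    intro x hx
    exact ⟨by linarith [hx.1, hx.2], by linarith [hx.1, hx.2]⟩
  have hrefl : Fe a b p f = (Fe (-b) (-a) (-p) (fun x => f (-x))) ∘ Neg.neg := by
    funext y
    exact Fe_reflect a b p f y
  rw [hrefl]
  have hp' : -p ∈ Icc (-b) (-a) := ⟨by linarith [hp.2], by linarith [hp.1]⟩
  have hf' : ContinuousOn (fun x => f (-x)) (Icc (-b) (-a)) := by
    apply hf.comp continuousOn_neg
    intro x hx
    exact ⟨by linarith [hx.2], by linarith [hx.1]⟩
  have hC' : ∀ z ∈ Icc (-b) (-a), |(fun x => f (-x)) z - (fun x => f (-x)) (-p)| ≤ C := by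
    intro z hz
    simp only [neg_neg]
    exact hC (-z) ⟨by linarith [hz.2], by linarith [hz.1]⟩
  have hy₀' : -y₀ ∈ Icc (-b) (-a) := ⟨by linarith [hy₀.2], by linarith [hy₀.1]⟩
  exact (cwa_right hp' hf' hC0 hC' hy₀' (by linarith)).comp
    continuous_neg.continuousWithinAt hmaps

lemma Fe_contOn {a b p C : ℝ} {f : ℝ → ℝ} (hp : p ∈ Icc a b)
    (hf : ContinuousOn f (Icc a b)) (hC0 : 0 ≤ C)
    (hC : ∀ z ∈ Icc a b, |f z - f p| ≤ C) :
    ContinuousOn (Fe a b p f) (Icc a b) := by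
  intro y₀ hy₀
  rcases lt_trichotomy y₀ p with h | h | h
  · exact cwa_left hp hf hC0 hC hy₀ h
  · rw [h]; exact cwa_at_p hp hf hC0 hC
  · exact cwa_right hp hf hC0 hC hy₀ h

/-- **Existence and continuity of the one-dimensional star-shaped envelope.** For
continuous `f : [a,b] → ℝ` and `p ∈ [a,b]`, the pointwise supremum of all star-shaped
(w.r.t. `p`) minorants of `f` on `[a,b]` is itself a star-shaped (w.r.t. `p`) minorant
of `f`, and it is continuous on `[a,b]`. -/
theorem star_envelope_exists_continuous
    (a b : ℝ) (hab : a ≤ b) (p : ℝ) (hp : p ∈ Set.Icc a b)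
    (f : ℝ → ℝ) (hf : ContinuousOn f (Set.Icc a b)) :
    (∀ y ∈ Set.Icc a b, starEnv (Set.Icc a b) p f y ≤ f y) ∧
    StarShapedFunOn (Set.Icc a b) p (starEnv (Set.Icc a b) p f) ∧
    ContinuousOn (starEnv (Set.Icc a b) p f) (Set.Icc a b) := by
  obtain ⟨C₀, hC₀⟩ := isCompact_Icc.exists_bound_of_continuousOn hf
  set C := C₀ + |f p| with hCdef
  have hC : ∀ z ∈ Set.Icc a b, |f z - f p| ≤ C := by
    intro z hz
    have h1 : ‖f z‖ ≤ C₀ := hC₀ z hz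
    rw [Real.norm_eq_abs] at h1
    calc |f z - f p| ≤ |f z| + |f p| := abs_sub (f z) (f p)
      _ ≤ C := by rw [hCdef]; linarith
  have hC0 : 0 ≤ C := by
    have h2 := hC₀ p hp
    rw [Real.norm_eq_abs] at h2
    rw [hCdef]; linarith [abs_nonneg (f p)]
  refine ⟨?_, ?_, ?_⟩
  · intro y hy
    rw [starEnv_eq_Fe hp hC hy]
    exact Fe_le_f hC hy
  · have hset : Epigraph (Set.Icc a b) (starEnv (Set.Icc a b) p f) =
        Epigraph (Set.Icc a b) (Fe a b p f) := by
      ext q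
      simp only [Epigraph, Set.mem_setOf_eq]
      exact and_congr_right fun hq => by rw [starEnv_eq_Fe hp hC hq]
    show StarShapedWrt _ _
    rw [show starEnv (Set.Icc a b) p f p = Fe a b p f p from starEnv_eq_Fe hp hC hp, hset]
    exact Fe_starshaped hp hC
  · exact (Fe_contOn hp hf hC0 hC).congr fun y hy => starEnv_eq_Fe hp hC hy
end
end

section
/- Let f : [a,b] → ℝ be continuous and suppose f achieves its minimum at a single point x ∈ [a,b] (f(y) > f(x) for all y ≠ x). Then the star-shaped envelope of f with respect to x also achieves its minimum at the single point x: star_x(f)(y) > star_x(f)(x) = f(x) for all y ∈ [a,b], y ≠ x. -/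
open Set

noncomputable section

lemma starShaped_max_affine (a b x c s t : ℝ) (hx : x ∈ Set.Icc a b)
    (hcx : s * x + t ≤ c) :
    StarShapedFunOn (Set.Icc a b) x (fun z => max c (s * z + t)) := by
  have hgx : max c (s * x + t) = c := max_eq_left hcx
  constructor
  · exact ⟨hx, le_refl _⟩
  · rintro ⟨z, μ⟩ ⟨hz, hμ⟩ p hp
    obtain ⟨u, v, hu, hv, huv, rfl⟩ := hp
    simp only [Epigraph, Set.mem_setOf_eq] at hμ ⊢
    have hcμ : c ≤ μ := le_trans (le_max_left _ _) hμ
    have hsμ : s * z + t ≤ μ := le_trans (le_max_right _ _) hμ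
    have h1 : (u • ((x : ℝ), max c (s * x + t)) + v • (z, μ)).1 = u * x + v * z := by
      simp
    have h2 : (u • ((x : ℝ), max c (s * x + t)) + v • (z, μ)).2
        = u * max c (s * x + t) + v * μ := by simp
    rw [h1, h2, hgx]
    refine ⟨(convex_Icc a b) hx hz hu hv huv, ?_⟩
    have huvc : u * c + v * c = c := by rw [← add_mul, huv, one_mul]
    have huvt : u * t + v * t = t := by rw [← add_mul, huv, one_mul]
    have hA : c ≤ u * c + v * μ := by
      nlinarith [mul_le_mul_of_nonneg_left hcμ hv]
    have hB : s * (u * x + v * z) + t ≤ u * c + v * μ := by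
      nlinarith [mul_le_mul_of_nonneg_left hcx hu, mul_le_mul_of_nonneg_left hsμ hv]
    exact max_le hA hB

lemma bddAbove_envSet (a b x y : ℝ) (f : ℝ → ℝ) (hy : y ∈ Set.Icc a b) :
    f y ∈ upperBounds {r : ℝ | ∃ g : ℝ → ℝ,
      StarShapedFunOn (Set.Icc a b) x g ∧ (∀ z ∈ Set.Icc a b, g z ≤ f z) ∧ r = g y} := by
  rintro r ⟨g, _, hm, rfl⟩
  exact hm y hy

lemma lt_starEnv (a b x y c s t : ℝ) (f : ℝ → ℝ) (hx : x ∈ Set.Icc a b) (hy : y ∈ Set.Icc a b)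
    (h1 : s * x + t ≤ f x) (h2 : ∀ z ∈ Set.Icc a b, max (f x) (s * z + t) ≤ f z)
    (h3 : f x < s * y + t) :
    f x < starEnv (Set.Icc a b) x f y := by
  have hg := starShaped_max_affine a b x (f x) s t hx h1
  have hmem : max (f x) (s * y + t) ∈ {r : ℝ | ∃ g : ℝ → ℝ,
      StarShapedFunOn (Set.Icc a b) x g ∧ (∀ z ∈ Set.Icc a b, g z ≤ f z) ∧ r = g y} :=
    ⟨_, hg, h2, rfl⟩
  have hle := le_csSup ⟨f y, bddAbove_envSet a b x y f hy⟩ hmem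
  exact lt_of_lt_of_le (lt_max_of_lt_right h3) hle

/-- **The star-shaped envelope preserves a unique minimum.** If continuous
`f : [a,b] → ℝ` attains its minimum at the single point `x`, then so does its
star-shaped envelope with respect to `x`:
`star_x(f)(y) > star_x(f)(x) = f(x)` for every `y ≠ x` in `[a,b]`. -/
theorem star_envelope_unique_minimum
    (a b : ℝ) (hab : a ≤ b) (x : ℝ) (hx : x ∈ Set.Icc a b)
    (f : ℝ → ℝ) (hf : ContinuousOn f (Set.Icc a b))
    (hmin : ∀ y ∈ Set.Icc a b, y ≠ x → f x < f y) :
    starEnv (Set.Icc a b) x f x = f x ∧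
    ∀ y ∈ Set.Icc a b, y ≠ x →
      starEnv (Set.Icc a b) x f x < starEnv (Set.Icc a b) x f y := by
  have hfx_le : ∀ z ∈ Set.Icc a b, f x ≤ f z := by
    intro z hz
    rcases eq_or_ne z x with rfl | hzx
    · exact le_refl _
    · exact (hmin z hz hzx).le
  -- the envelope equals f x at x
  have henvx : starEnv (Set.Icc a b) x f x = f x := by
    have hconst : StarShapedFunOn (Set.Icc a b) x (fun z => max (f x) (0 * z + f x)) :=
      starShaped_max_affine a b x (f x) 0 (f x) hx (by simp)
    have hmem : f x ∈ {r : ℝ | ∃ g : ℝ → ℝ,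
        StarShapedFunOn (Set.Icc a b) x g ∧ (∀ z ∈ Set.Icc a b, g z ≤ f z) ∧ r = g x} := by
      refine ⟨_, hconst, ?_, by simp⟩
      intro z hz
      simpa using hfx_le z hz
    refine le_antisymm (csSup_le ⟨f x, hmem⟩ (bddAbove_envSet a b x x f hx)) ?_
    exact le_csSup ⟨f x, bddAbove_envSet a b x x f hx⟩ hmem
  refine ⟨henvx, ?_⟩
  intro y hy hyx
  rw [henvx]
  rcases lt_or_gt_of_ne hyx with hlt | hgt
  · -- y < x : use a decreasing affine piece on [a, y0]
    set y0 := (x + y) / 2 with hy0def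
    have hy_lt : y < y0 := by simp [hy0def]; linarith
    have hy0_lt : y0 < x := by simp [hy0def]; linarith
    have ha_lt : a < y0 := lt_of_le_of_lt hy.1 hy_lt
    have hsub : Set.Icc a y0 ⊆ Set.Icc a b := Set.Icc_subset_Icc le_rfl (le_trans hy0_lt.le hx.2)
    obtain ⟨z0, hz0K, hz0min⟩ := (isCompact_Icc (a := a) (b := y0)).exists_isMinOn
      (Set.nonempty_Icc.2 ha_lt.le) (hf.mono hsub)
    have hz0ab : z0 ∈ Set.Icc a b := hsub hz0K
    have hz0x : z0 ≠ x := by intro h; rw [h] at hz0K; exact absurd hz0K.2 (not_le.2 hy0_lt)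
    set m := f z0 - f x with hmdef
    have hm : 0 < m := by have := hmin z0 hz0ab hz0x; simp [hmdef]; linarith
    set s := m / (a - y0) with hsdef
    have hden : a - y0 < 0 := by linarith
    have hs_eq : s * (a - y0) = m := div_mul_cancel₀ m (by linarith)
    have hs_neg : s < 0 := div_neg_of_pos_of_neg hm hden
    refine lt_starEnv a b x y (f x) s (f x - s * y0) f hx hy ?_ ?_ ?_
    · nlinarith
    · intro z hz
      refine max_le (hfx_le z hz) ?_
      rcases le_or_gt z y0 with hzle | hzgt
      · have hfz : f z0 ≤ f z := hz0min ⟨hz.1, hzle⟩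
        nlinarith [mul_nonpos_of_nonpos_of_nonneg hs_neg.le (by linarith [hz.1] : (0:ℝ) ≤ z - a)]
      · have : f x ≤ f z := hfx_le z hz
        nlinarith
    · nlinarith
  · -- x < y : use an increasing affine piece on [y0, b]
    set y0 := (x + y) / 2 with hy0def
    have hy_gt : y0 < y := by simp [hy0def]; linarith
    have hy0_gt : x < y0 := by simp [hy0def]; linarith
    have hb_gt : y0 < b := lt_of_lt_of_le hy_gt hy.2
    have hsub : Set.Icc y0 b ⊆ Set.Icc a b := Set.Icc_subset_Icc (le_trans hx.1 hy0_gt.le) le_rfl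
    obtain ⟨z0, hz0K, hz0min⟩ := (isCompact_Icc (a := y0) (b := b)).exists_isMinOn
      (Set.nonempty_Icc.2 hb_gt.le) (hf.mono hsub)
    have hz0ab : z0 ∈ Set.Icc a b := hsub hz0K
    have hz0x : z0 ≠ x := by intro h; rw [h] at hz0K; exact absurd hz0K.1 (not_le.2 hy0_gt)
    set m := f z0 - f x with hmdef
    have hm : 0 < m := by have := hmin z0 hz0ab hz0x; simp [hmdef]; linarith
    set s := m / (b - y0) with hsdef
    have hden : 0 < b - y0 := by linarith
    have hs_eq : s * (b - y0) = m := div_mul_cancel₀ m (by linarith)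
    have hs_pos : 0 < s := div_pos hm hden
    refine lt_starEnv a b x y (f x) s (f x - s * y0) f hx hy ?_ ?_ ?_
    · nlinarith
    · intro z hz
      refine max_le (hfx_le z hz) ?_
      rcases le_or_gt y0 z with hzge | hzlt
      · have hfz : f z0 ≤ f z := hz0min ⟨hzge, hz.2⟩
        nlinarith [mul_nonpos_of_nonneg_of_nonpos hs_pos.le (by linarith [hz.2] : z - b ≤ 0)]
      · have : f x ≤ f z := hfx_le z hz
        nlinarith
    · nlinarith
end
end

section
/- Let f : [a,b] → ℝ be continuous and monotone (nondecreasing, respectively nonincreasing), and let p ∈ [a,b]. Then the star-shaped envelope of f with respect to p is monotone in the same sense (nondecreasing, respectively nonincreasing) on [a,b]. -/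
open Set

noncomputable section

lemma star_ineq {a b p : ℝ} {g : ℝ → ℝ} (hg : StarShapedFunOn (Icc a b) p g)
    {w : ℝ} (hw : w ∈ Icc a b) {t : ℝ} (h0 : 0 ≤ t) (h1 : t ≤ 1) :
    g ((1-t)*p + t*w) ≤ (1-t) * g p + t * g w := by
  have hmem : (((1-t)*p + t*w, (1-t)*(g p) + t*(g w)) : ℝ × ℝ)
      ∈ segment ℝ (p, g p) (w, g w) := by
    refine ⟨1-t, t, by linarith, h0, by ring, ?_⟩
    simp [Prod.ext_iff, smul_eq_mul]
  exact (hg.2 (w, g w) ⟨hw, le_rfl⟩ hmem).2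

lemma star_sec {a b p : ℝ} {g : ℝ → ℝ} (hg : StarShapedFunOn (Icc a b) p g)
    {w q t : ℝ} (hw : w ∈ Icc a b) (h0 : 0 ≤ t) (h1 : t ≤ 1)
    (hq : q = (1-t)*p + t*w) :
    g q ≤ (1-t)*g p + t*g w := by
  rw [hq]; exact star_ineq hg hw h0 h1

lemma mkStar {a b p : ℝ} (hp : p ∈ Icc a b) {g : ℝ → ℝ}
    (h : ∀ w ∈ Icc a b, ∀ t : ℝ, 0 ≤ t → t ≤ 1 →
      g ((1-t)*p + t*w) ≤ (1-t) * g p + t * g w) :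
    StarShapedFunOn (Icc a b) p g := by
  refine ⟨⟨hp, le_rfl⟩, ?_⟩
  rintro ⟨w, μ⟩ ⟨hw, hμ⟩ x ⟨u, t, hu, ht, hut, rfl⟩
  have hu1 : u = 1 - t := by linarith
  subst hu1
  have hkey := h w hw t ht (by linarith)
  constructor
  · show (1-t) • p + t • w ∈ Icc a b
    simp only [smul_eq_mul]
    constructor
    · nlinarith [hp.1, hw.1]
    · nlinarith [hp.2, hw.2]
  · show g ((1-t) • p + t • w) ≤ (1-t) • g p + t • μ
    simp only [smul_eq_mul]
    nlinarith [hkey]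

lemma starEnv_mono (a b : ℝ) (hab : a ≤ b) (p : ℝ) (hp : p ∈ Icc a b)
    (f : ℝ → ℝ) (hf : ContinuousOn f (Icc a b)) (hmono : MonotoneOn f (Icc a b)) :
    MonotoneOn (starEnv (Icc a b) p f) (Icc a b) := by
  have hbb : BddBelow (f '' Icc a b) := (isCompact_Icc.image_of_continuousOn hf).bddBelow
  set m := sInf (f '' Icc a b) with hmdef
  have hm : ∀ w ∈ Icc a b, m ≤ f w := fun w hw => csInf_le hbb ⟨w, hw, rfl⟩
  have hbdd : ∀ x, x ∈ Icc a b → BddAbove {r : ℝ | ∃ g : ℝ → ℝ,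
      StarShapedFunOn (Icc a b) p g ∧ (∀ w ∈ Icc a b, g w ≤ f w) ∧ r = g x} := by
    intro x hx
    refine ⟨f x, ?_⟩
    rintro r ⟨g, hg, hgf, rfl⟩
    exact hgf x hx
  intro y hy z hz hyz
  simp only [starEnv]
  apply csSup_le
  · refine ⟨m, fun _ => m, ?_, fun w hw => hm w hw, rfl⟩
    apply mkStar hp
    intro w hw t h0 h1
    show m ≤ (1-t)*m + t*m
    nlinarith
  rintro r ⟨g, hg, hgf, rfl⟩
  -- chord inequalities
  have hDleft : ∀ w ∈ Icc a b, w ≤ y → y < p →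
      (g y - g p)*(p - w) ≤ (g w - g p)*(p - y) := by
    intro w hw hwy hyp
    have hpw : 0 < p - w := by linarith
    obtain ⟨t, ht⟩ : ∃ t : ℝ, t = (p - y)/(p - w) := ⟨_, rfl⟩
    have h0 : 0 ≤ t := by rw [ht]; exact div_nonneg (by linarith) (by linarith)
    have h1 : t ≤ 1 := by rw [ht]; exact (div_le_one hpw).2 (by linarith)
    have hkey : t * (p - w) = p - y := by rw [ht]; exact div_mul_cancel₀ _ (ne_of_gt hpw)
    have hs := star_sec hg hw h0 h1 (q := y) (by linear_combination hkey)
    have h2 : g y - g p ≤ t*(g w - g p) := by linarith [hs]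
    have h3 : (g y - g p)*(p-w) ≤ t*(g w - g p)*(p-w) :=
      mul_le_mul_of_nonneg_right h2 (le_of_lt hpw)
    have e : t*(g w - g p)*(p-w) = (g w - g p)*(p - y) := by
      linear_combination (g w - g p) * hkey
    linarith
  have hDright : ∀ w ∈ Icc a b, y ≤ w → p < y →
      (g y - g p)*(w - p) ≤ (g w - g p)*(y - p) := by
    intro w hw hwy hpy
    have hwp : 0 < w - p := by linarith
    obtain ⟨t, ht⟩ : ∃ t : ℝ, t = (y - p)/(w - p) := ⟨_, rfl⟩
    have h0 : 0 ≤ t := by rw [ht]; exact div_nonneg (by linarith) (by linarith)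
    have h1 : t ≤ 1 := by rw [ht]; exact (div_le_one hwp).2 (by linarith)
    have hkey : t * (w - p) = y - p := by rw [ht]; exact div_mul_cancel₀ _ (ne_of_gt hwp)
    have hs := star_sec hg hw h0 h1 (q := y) (by linear_combination -hkey)
    have h2 : g y - g p ≤ t*(g w - g p) := by linarith [hs]
    have h3 : (g y - g p)*(w-p) ≤ t*(g w - g p)*(w-p) :=
      mul_le_mul_of_nonneg_right h2 (le_of_lt hwp)
    have e : t*(g w - g p)*(w-p) = (g w - g p)*(y - p) := by
      linear_combination (g w - g p) * hkey
    linarith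
  rcases le_or_gt (g y) (g p) with hcase1 | hcase2
  · rcases le_or_gt p z with hpz | hzp
    · -- Case 1a : g y ≤ g p, p ≤ z
      set g' : ℝ → ℝ := fun w => if w < p then min (g y) m else g y with hg'def
      have hg'p : g' p = g y := by simp only [hg'def]; rw [if_neg (lt_irrefl p)]
      refine le_csSup_of_le (hbdd z hz) ⟨g', ?_, ?_, rfl⟩ ?_
      · apply mkStar hp
        intro w hw t h0 h1
        rw [hg'p]
        by_cases hwp : w < p
        · have hg'w : g' w = min (g y) m := by simp only [hg'def]; rw [if_pos hwp]
          rw [hg'w]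
          by_cases hq : (1-t)*p + t*w < p
          · have : g' ((1-t)*p + t*w) = min (g y) m := by
              simp only [hg'def]; rw [if_pos hq]
            rw [this]
            nlinarith [min_le_left (g y) m]
          · have ht0 : t = 0 := by nlinarith [not_lt.1 hq]
            subst ht0
            have : g' ((1-0)*p + 0*w) = g y := by
              simp only [hg'def]
              rw [if_neg (by push_neg; nlinarith [not_lt.1 hq])]
            rw [this]; nlinarith [min_le_left (g y) m]
        · have hwp' := not_lt.1 hwp
          have hg'w : g' w = g y := by simp only [hg'def]; rw [if_neg hwp]
          have hq : ¬ ((1-t)*p + t*w < p) := by push_neg; nlinarith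
          have : g' ((1-t)*p + t*w) = g y := by simp only [hg'def]; rw [if_neg hq]
          rw [this, hg'w]; nlinarith
      · intro w hw
        simp only [hg'def]
        by_cases hwp : w < p
        · rw [if_pos hwp]
          exact le_trans (min_le_right _ _) (hm w hw)
        · rw [if_neg hwp]
          have := hmono hp hw (not_lt.1 hwp)
          have := hgf p hp
          linarith
      · have : g' z = g y := by simp only [hg'def]; rw [if_neg (not_lt.2 hpz)]
        rw [this]
    · -- Case 1b : g y ≤ g p, z < p  (so y ≤ z < p)
      have hyp : y < p := lt_of_le_of_lt hyz hzp
      have hpz0 : (0:ℝ) < p - z := by linarith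
      obtain ⟨σ, hσdef⟩ : ∃ σ : ℝ, σ = (g y - g p)/(p - z) := ⟨_, rfl⟩
      have hσz : σ * (p - z) = g y - g p := by
        rw [hσdef]; exact div_mul_cancel₀ _ (ne_of_gt hpz0)
      have hσ0 : σ ≤ 0 := by nlinarith [hσz]
      set g' : ℝ → ℝ := fun w =>
        if w ≤ z then g p + σ*(p - w)
        else if w < p then min (g w) (g p + σ*(p - w)) else g p with hg'def
      have hg'p : g' p = g p := by
        simp only [hg'def]; rw [if_neg (by linarith), if_neg (lt_irrefl p)]
      have hline : ∀ q, q ≤ p → g' q ≤ g p + σ*(p - q) := by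
        intro q hq
        simp only [hg'def]
        by_cases hq1 : q ≤ z
        · rw [if_pos hq1]
        · rw [if_neg hq1]
          by_cases hq2 : q < p
          · rw [if_pos hq2]; exact min_le_right _ _
          · rw [if_neg hq2]
            have : p - q = 0 := by linarith [not_lt.1 hq2]
            rw [this, mul_zero, add_zero]
      have hsubg : ∀ q, z < q → q ≤ p → g' q ≤ g q := by
        intro q hq1 hq2
        simp only [hg'def]
        rw [if_neg (by linarith)]
        by_cases hq3 : q < p
        · rw [if_pos hq3]; exact min_le_left _ _
        · rw [if_neg hq3]
          have : q = p := le_antisymm hq2 (not_lt.1 hq3)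
          rw [this]
      refine le_csSup_of_le (hbdd z hz) ⟨g', ?_, ?_, rfl⟩ ?_
      · apply mkStar hp
        intro w hw t h0 h1
        rw [hg'p]
        by_cases hwp : p ≤ w
        · have hg'w : g' w = g p := by
            simp only [hg'def]; rw [if_neg (by linarith), if_neg (by push_neg; exact hwp)]
          have hq : ¬ ((1-t)*p + t*w < p) := by push_neg; nlinarith
          have hqz : ¬ ((1-t)*p + t*w ≤ z) := by push_neg; nlinarith [not_lt.1 hq]
          have : g' ((1-t)*p + t*w) = g p := by
            simp only [hg'def]; rw [if_neg hqz, if_neg hq]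
          rw [this, hg'w]; nlinarith
        · push_neg at hwp
          have hqp : (1-t)*p + t*w ≤ p := by nlinarith
          by_cases hwz : w ≤ z
          · have hg'w : g' w = g p + σ*(p - w) := by simp only [hg'def]; rw [if_pos hwz]
            rw [hg'w]
            have h5 := hline ((1-t)*p + t*w) hqp
            have heq : g p + σ*(p - ((1-t)*p + t*w))
                = (1-t)*g p + t*(g p + σ*(p - w)) := by ring
            linarith [heq ▸ h5]
          · have hg'w : g' w = min (g w) (g p + σ*(p - w)) := by
              simp only [hg'def]; rw [if_neg hwz, if_pos hwp]
            rw [hg'w]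
            rcases le_total (g w) (g p + σ*(p - w)) with hmin | hmin
            · rw [min_eq_left hmin]
              push_neg at hwz
              have hq1 : z < (1-t)*p + t*w := by nlinarith
              have h5 := hsubg ((1-t)*p + t*w) hq1 hqp
              have h6 := star_ineq hg hw h0 h1
              linarith
            · rw [min_eq_right hmin]
              have h5 := hline ((1-t)*p + t*w) hqp
              have heq : g p + σ*(p - ((1-t)*p + t*w))
                  = (1-t)*g p + t*(g p + σ*(p - w)) := by ring
              linarith [heq ▸ h5]
      · intro w hw
        by_cases hwz : w ≤ z
        · have hg'w : g' w = g p + σ*(p - w) := by simp only [hg'def]; rw [if_pos hwz]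
          rw [hg'w]
          by_cases hwy : y ≤ w
          · have h5 : σ*(p-w) ≤ g y - g p := by nlinarith [hσz]
            have h6 := hgf y hy
            have h7 := hmono hy hw hwy
            linarith
          · push_neg at hwy
            have hD := hDleft w hw (le_of_lt hwy) hyp
            have hpy0 : (0:ℝ) < p - y := by linarith
            have hpw0 : (0:ℝ) < p - w := by linarith
            have hA : σ * (p - w) ≤ 0 := mul_nonpos_of_nonpos_of_nonneg hσ0 (by linarith)
            have e1 : σ*(p-w)*(p-y) ≤ σ*(p-w)*(p-z) := by nlinarith [hA]
            have e2 : σ*(p-w)*(p-z) = (g y - g p)*(p-w) := by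
              linear_combination (p - w) * hσz
            have e3 : σ*(p-w)*(p-y) ≤ (g w - g p)*(p-y) := by linarith
            have h5 : σ*(p-w) ≤ g w - g p := le_of_mul_le_mul_right e3 hpy0
            have h6 := hgf w hw
            linarith
        · have hg'w : g' w ≤ g p ⊔ g w := by
            simp only [hg'def]
            rw [if_neg hwz]
            by_cases hq3 : w < p
            · rw [if_pos hq3]
              exact le_trans (min_le_left _ _) (le_max_right _ _)
            · rw [if_neg hq3]
              exact le_max_left _ _
          rcases le_or_gt w p with hwple | hwpgt
          · have : g' w ≤ g w := hsubg w (not_le.1 hwz) hwple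
            linarith [hgf w hw]
          · have hg'w2 : g' w = g p := by
              simp only [hg'def]; rw [if_neg hwz, if_neg (by push_neg; linarith)]
            rw [hg'w2]
            have := hmono hp hw (le_of_lt hwpgt)
            linarith [hgf p hp]
      · have : g' z = g p + σ*(p - z) := by simp only [hg'def]; rw [if_pos le_rfl]
        rw [this]; linarith [hσz]
  · rcases le_or_gt y p with hyp | hpy
    · -- Case 2a : g p < g y, y ≤ p (then y < p)
      have hyp' : y < p := by
        rcases lt_or_eq_of_le hyp with h | h
        · exact h
        · exfalso; rw [h] at hcase2; exact lt_irrefl _ hcase2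
      refine le_csSup_of_le (hbdd z hz) ⟨fun _ => g y, ?_, ?_, rfl⟩ le_rfl
      · apply mkStar hp
        intro w hw t h0 h1
        show g y ≤ (1-t)*(g y) + t*(g y)
        nlinarith
      · intro w hw
        by_cases hwy : y ≤ w
        · have := hmono hy hw hwy
          linarith [hgf y hy]
        · push_neg at hwy
          have hD := hDleft w hw (le_of_lt hwy) hyp'
          have hpy0 : (0:ℝ) < p - y := by linarith
          have e1 : (g y - g p)*(p-y) ≤ (g y - g p)*(p-w) := by nlinarith
          have e2 : (g y - g p)*(p-y) ≤ (g w - g p)*(p-y) := by linarith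
          have h5 : g y - g p ≤ g w - g p := le_of_mul_le_mul_right e2 hpy0
          linarith [hgf w hw]
    · -- Case 2b : g p < g y, p < y
      have hyp0 : (0:ℝ) < y - p := by linarith
      obtain ⟨s, hsdef⟩ : ∃ s : ℝ, s = (g y - g p)/(y - p) := ⟨_, rfl⟩
      have hskey : s * (y - p) = g y - g p := by
        rw [hsdef]; exact div_mul_cancel₀ _ (ne_of_gt hyp0)
      have hs0 : 0 < s := by rw [hsdef]; exact div_pos (by linarith) hyp0
      set g' : ℝ → ℝ := fun w => min (g w) (g p + s*(w - p)) with hg'def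
      have hg'p : g' p = g p := by
        simp only [hg'def]
        rw [sub_self, mul_zero, add_zero, min_self]
      refine le_csSup_of_le (hbdd z hz) ⟨g', ?_, ?_, rfl⟩ ?_
      · apply mkStar hp
        intro w hw t h0 h1
        rw [hg'p]
        simp only [hg'def]
        rcases le_total (g w) (g p + s*(w - p)) with hmin | hmin
        · rw [min_eq_left hmin]
          exact le_trans (min_le_left _ _) (star_ineq hg hw h0 h1)
        · rw [min_eq_right hmin]
          refine le_trans (min_le_right _ _) (le_of_eq ?_)
          ring
      · intro w hw
        exact le_trans (min_le_left _ _) (hgf w hw)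
      · have hzy : p < z := lt_of_lt_of_le hpy hyz
        simp only [hg'def]
        refine le_min ?_ ?_
        · have hD := hDright z hz hyz hpy
          have e1 : (g y - g p)*(y-p) ≤ (g y - g p)*(z-p) := by nlinarith
          have e2 : (g y - g p)*(y-p) ≤ (g z - g p)*(y-p) := by linarith
          have h5 : g y - g p ≤ g z - g p := le_of_mul_le_mul_right e2 hyp0
          linarith
        · nlinarith [hskey]

lemma star_reflect {a b p : ℝ} (hp : p ∈ Icc a b) {g : ℝ → ℝ}
    (hg : StarShapedFunOn (Icc a b) p g) :
    StarShapedFunOn (Icc a b) (a + b - p) (fun w => g (a + b - w)) := by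
  apply mkStar ⟨by linarith [hp.2], by linarith [hp.1]⟩
  intro w hw t h0 h1
  have hw' : a + b - w ∈ Icc a b := ⟨by linarith [hw.2], by linarith [hw.1]⟩
  have hs := star_ineq hg hw' h0 h1
  have e1 : a + b - ((1-t)*(a+b-p) + t*w) = (1-t)*p + t*(a+b-w) := by ring
  have e2 : a + b - (a + b - p) = p := by ring
  show g (a + b - ((1-t)*(a+b-p) + t*w)) ≤ (1-t) * g (a+b-(a+b-p)) + t * g (a+b-w)
  rw [e1, e2]
  exact hs

lemma starEnv_reflect (a b p : ℝ) (hp : p ∈ Icc a b) (f : ℝ → ℝ) (x : ℝ) :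
    starEnv (Icc a b) p f x
      = starEnv (Icc a b) (a+b-p) (fun w => f (a+b-w)) (a+b-x) := by
  simp only [starEnv]
  congr 1
  ext r
  constructor
  · rintro ⟨g, hg, hgf, rfl⟩
    refine ⟨fun w => g (a+b-w), star_reflect hp hg, ?_, ?_⟩
    · intro w hw
      exact hgf (a+b-w) ⟨by linarith [hw.2], by linarith [hw.1]⟩
    · show g x = g (a+b-(a+b-x))
      rw [show a+b-(a+b-x) = x by ring]
  · rintro ⟨g, hg, hgf, rfl⟩
    have hp' : a + b - p ∈ Icc a b := ⟨by linarith [hp.2], by linarith [hp.1]⟩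
    have hstar := star_reflect hp' hg
    rw [show a+b-(a+b-p) = p by ring] at hstar
    refine ⟨fun w => g (a+b-w), hstar, ?_, ?_⟩
    · intro w hw
      have := hgf (a+b-w) ⟨by linarith [hw.2], by linarith [hw.1]⟩
      simpa [show a+b-(a+b-w) = w by ring] using this
    · rfl

/-- **The star-shaped envelope of a monotone function is monotone** (in the same
sense: nondecreasing, respectively nonincreasing). -/
theorem star_envelope_monotone
    (a b : ℝ) (hab : a ≤ b) (p : ℝ) (hp : p ∈ Set.Icc a b)
    (f : ℝ → ℝ) (hf : ContinuousOn f (Set.Icc a b)) :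
    (MonotoneOn f (Set.Icc a b) →
      MonotoneOn (starEnv (Set.Icc a b) p f) (Set.Icc a b)) ∧
    (AntitoneOn f (Set.Icc a b) →
      AntitoneOn (starEnv (Set.Icc a b) p f) (Set.Icc a b)) := by
  constructor
  · exact fun hmono => starEnv_mono a b hab p hp f hf hmono
  · intro hanti y hy z hz hyz
    have hP : a + b - p ∈ Icc a b := ⟨by linarith [hp.2], by linarith [hp.1]⟩
    have hF : MonotoneOn (fun w => f (a+b-w)) (Icc a b) := by
      intro u hu v hv huv
      exact hanti ⟨by linarith [hv.2], by linarith [hv.1]⟩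
        ⟨by linarith [hu.2], by linarith [hu.1]⟩ (by linarith)
    have hFc : ContinuousOn (fun w => f (a+b-w)) (Icc a b) := by
      apply hf.comp ((continuous_const.sub continuous_id).continuousOn)
      intro w hw
      have : a + b - w ∈ Icc a b := ⟨by linarith [hw.2], by linarith [hw.1]⟩
      simpa using this
    have hE := starEnv_mono a b hab (a+b-p) hP _ hFc hF
    rw [starEnv_reflect a b p hp f y, starEnv_reflect a b p hp f z]
    exact hE ⟨by linarith [hz.2], by linarith [hz.1]⟩
      ⟨by linarith [hy.2], by linarith [hy.1]⟩ (by linarith)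
end
end
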